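/- Let C > 0 and let f, g, h : ℝ → ℝ be nonnegative functions that are nondecreasing on [1, ∞) and satisfy: f(μ) ≤ g(μ) + h(μ) ≤ f(2μ) for all μ ≥ 1, and g(μ) ≤ C·log μ and h(μ) ≤ C·log μ for all μ ≥ e. For Λ > e define the Cesàro mean τ_Λ(F) = (1/log Λ) · ∫_{e}^{Λ} F(μ)/(μ · log μ) dμ. Then there exists Λ₀ > e such that for all Λ ≥ Λ₀, |τ_Λ(f) − τ_Λ(g) − τ_Λ(h)| ≤ 3C · log(log Λ) / log Λ. -/

import Mathlib

set_option maxHeartbeats 1000000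

lemma dix_integ {F : ℝ → ℝ} {a b : ℝ} (hab : a ≤ b)
    (hF : MonotoneOn F (Set.Icc a b)) {w : ℝ → ℝ}
    (hw : ContinuousOn w (Set.Icc a b)) (hw0 : ∀ x ∈ Set.Icc a b, w x ≠ 0) :
    IntervalIntegrable (fun μ => F μ / w μ) MeasureTheory.volume a b := by
  have huIcc : Set.uIcc a b = Set.Icc a b := Set.uIcc_of_le hab
  have h1 : IntervalIntegrable F MeasureTheory.volume a b := by
    apply MonotoneOn.intervalIntegrable; rwa [huIcc]
  have h2 : ContinuousOn (fun x => (w x)⁻¹) (Set.uIcc a b) := by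
    rw [huIcc]; exact hw.inv₀ hw0
  simpa [div_eq_mul_inv] using h1.mul_continuousOn h2

lemma dix_w1cont {a b : ℝ} (ha : 0 < a) :
    ContinuousOn (fun μ : ℝ => μ * Real.log μ) (Set.Icc a b) :=
  continuousOn_id.mul (Real.continuousOn_log.mono fun _ hx => ne_of_gt (lt_of_lt_of_le ha hx.1))

lemma dix_w2cont {a b : ℝ} (ha : 0 < a) :
    ContinuousOn (fun ν : ℝ => ν * (Real.log ν - Real.log 2)) (Set.Icc a b) :=
  continuousOn_id.mul ((Real.continuousOn_log.mono fun _ hx =>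
    ne_of_gt (lt_of_lt_of_le ha hx.1)).sub continuousOn_const)

lemma dix_w2pos {a : ℝ} {ν : ℝ} (ha : 2 < a) (hν : a ≤ ν) :
    0 < ν * (Real.log ν - Real.log 2) := by
  have h2ν : (2:ℝ) < ν := lt_of_lt_of_le ha hν
  have : Real.log 2 < Real.log ν := Real.log_lt_log two_pos h2ν
  have : 0 < Real.log ν - Real.log 2 := by linarith
  positivity

lemma dix_antider {a b : ℝ} (ha : 2 < a) (hab : a ≤ b) :
    ∫ ν in a..b, 1 / (ν * (Real.log ν - Real.log 2)) =
      Real.log (Real.log b - Real.log 2) - Real.log (Real.log a - Real.log 2) := by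
  have huIcc : Set.uIcc a b = Set.Icc a b := Set.uIcc_of_le hab
  have hderiv : ∀ ν ∈ Set.uIcc a b,
      HasDerivAt (fun ν => Real.log (Real.log ν - Real.log 2))
        (1 / (ν * (Real.log ν - Real.log 2))) ν := by
    intro ν hν
    rw [huIcc] at hν
    have h2ν : (2:ℝ) < ν := lt_of_lt_of_le ha hν.1
    have hν0 : ν ≠ 0 := by positivity
    have hd0 : Real.log ν - Real.log 2 ≠ 0 :=
      ne_of_gt (by have := Real.log_lt_log two_pos h2ν; linarith)
    have h1 : HasDerivAt (fun ν : ℝ => Real.log ν - Real.log 2) ν⁻¹ ν :=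
      (Real.hasDerivAt_log hν0).sub_const _
    have := h1.log hd0
    convert this using 1
    rw [inv_eq_one_div, div_div]
  have hint : IntervalIntegrable (fun ν => 1 / (ν * (Real.log ν - Real.log 2)))
      MeasureTheory.volume a b := by
    apply ContinuousOn.intervalIntegrable
    rw [huIcc]
    exact continuousOn_const.div (dix_w2cont (by linarith))
      (fun x hx => ne_of_gt (dix_w2pos ha hx.1))
  exact intervalIntegral.integral_eq_sub_of_hasDerivAt hderiv hint

theorem stmt_8 (C : ℝ) (hC : 0 < C) (f g h : ℝ → ℝ)
    (hf0 : ∀ x, 0 ≤ f x) (hg0 : ∀ x, 0 ≤ g x) (hh0 : ∀ x, 0 ≤ h x)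
    (hfm : MonotoneOn f (Set.Ici 1)) (hgm : MonotoneOn g (Set.Ici 1))
    (hhm : MonotoneOn h (Set.Ici 1))
    (hbound : ∀ μ ≥ (1 : ℝ), f μ ≤ g μ + h μ ∧ g μ + h μ ≤ f (2 * μ))
    (hlog : ∀ μ ≥ Real.exp 1, g μ ≤ C * Real.log μ ∧ h μ ≤ C * Real.log μ) :
    ∃ Λ₀ > Real.exp 1, ∀ Λ ≥ Λ₀,
      |(1 / Real.log Λ) * (∫ μ in (Real.exp 1)..Λ, f μ / (μ * Real.log μ))
          - (1 / Real.log Λ) * (∫ μ in (Real.exp 1)..Λ, g μ / (μ * Real.log μ))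
          - (1 / Real.log Λ) * (∫ μ in (Real.exp 1)..Λ, h μ / (μ * Real.log μ))|
        ≤ 3 * C * Real.log (Real.log Λ) / Real.log Λ := by
  have hexp5 : (6:ℝ) ≤ Real.exp 5 := by linarith [Real.add_one_le_exp (5:ℝ)]
  have h2e1 : (2:ℝ) < Real.exp 1 := by linarith [Real.exp_one_gt_d9]
  have he1lt3 : Real.exp 1 < 3 := by linarith [Real.exp_one_lt_d9]
  have he1pos : (0:ℝ) < Real.exp 1 := Real.exp_pos 1
  refine ⟨Real.exp (Real.exp 5), Real.exp_lt_exp.2 (by linarith), ?_⟩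
  intro Λ hΛ
  set e1 := Real.exp 1 with he1def
  have hΛ7 : (7:ℝ) ≤ Λ := by
    have h7 : (7:ℝ) ≤ Real.exp 6 := by linarith [Real.add_one_le_exp (6:ℝ)]
    have : Real.exp 6 ≤ Real.exp (Real.exp 5) := Real.exp_le_exp.2 hexp5
    linarith
  have hΛpos : (0:ℝ) < Λ := by linarith
  have hL6 : Real.exp 5 ≤ Real.log Λ := by
    have := Real.log_le_log (Real.exp_pos _) hΛ
    rwa [Real.log_exp] at this
  have hL : (6:ℝ) ≤ Real.log Λ := le_trans hexp5 hL6
  have hLL : (5:ℝ) ≤ Real.log (Real.log Λ) := by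
    have := Real.log_le_log (Real.exp_pos _) hL6
    rwa [Real.log_exp] at this
  have hLpos : (0:ℝ) < Real.log Λ := by linarith
  have he1Λ : e1 ≤ Λ := by linarith
  have h2e1Λ : 2 * e1 ≤ Λ := by linarith
  have he12e1 : e1 ≤ 2 * e1 := by linarith
  have hΛ2Λ : Λ ≤ 2 * Λ := by linarith
  have hlog2pos : (0:ℝ) < Real.log 2 := Real.log_pos one_lt_two
  have hlog2lt : Real.log 2 < 0.7 := by linarith [Real.log_two_lt_d9]
  -- pointwise bound on f
  have hfb : ∀ μ, e1 ≤ μ → f μ ≤ 2 * C * Real.log μ := by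
    intro μ hμ
    obtain ⟨h1, _⟩ := hbound μ (by linarith)
    obtain ⟨h3, h4⟩ := hlog μ hμ
    linarith
  -- nonvanishing facts for the weight μ log μ
  have hw1pos : ∀ {a : ℝ}, e1 ≤ a → ∀ x ∈ Set.Icc a Λ, 0 < x * Real.log x := by
    intro a ha x hx
    have hx1 : (1:ℝ) < x := by linarith [hx.1]
    have := Real.log_pos hx1
    positivity
  -- integrability of F/(μ log μ) on [a, Λ] for F monotone, a ≥ e1
  have hint1 : ∀ (F : ℝ → ℝ), MonotoneOn F (Set.Ici 1) → ∀ {a b : ℝ}, e1 ≤ a → a ≤ b → b ≤ Λ →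
      IntervalIntegrable (fun μ => F μ / (μ * Real.log μ)) MeasureTheory.volume a b := by
    intro F hF a b ha hab hbΛ
    apply dix_integ hab (hF.mono (fun x hx => by simp only [Set.mem_Ici]; linarith [hx.1]))
      (dix_w1cont (by linarith))
    intro x hx
    have hx1 : (1:ℝ) < x := by linarith [hx.1]
    have := Real.log_pos hx1
    positivity
  have int_f := hint1 f hfm (le_refl e1) he1Λ (le_refl Λ)
  have int_g := hint1 g hgm (le_refl e1) he1Λ (le_refl Λ)
  have int_h := hint1 h hhm (le_refl e1) he1Λ (le_refl Λ)
  have int_f_low := hint1 f hfm (le_refl e1) he12e1 h2e1Λ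
  have int_f_mid := hint1 f hfm (by linarith) h2e1Λ (le_refl Λ)
  -- integrability of f(2μ)/(μ log μ)
  have hf2m : MonotoneOn (fun μ => f (2 * μ)) (Set.Icc e1 Λ) := by
    intro x hx y hy hxy
    exact hfm (by simp only [Set.mem_Ici]; linarith [hx.1]) (by simp only [Set.mem_Ici]; linarith [hy.1]) (by linarith)
  have int_f2 : IntervalIntegrable (fun μ => f (2 * μ) / (μ * Real.log μ))
      MeasureTheory.volume e1 Λ := by
    apply dix_integ he1Λ hf2m (dix_w1cont he1pos)
    intro x hx
    exact ne_of_gt (hw1pos (le_refl e1) x hx)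
  -- ψ and its integrability
  set ψ : ℝ → ℝ := fun ν => f ν / (ν * (Real.log ν - Real.log 2)) with hψdef
  have hψint : ∀ {a b : ℝ}, 2 * e1 ≤ a ∨ Λ ≤ a → a ≤ b →
      IntervalIntegrable ψ MeasureTheory.volume a b := by
    intro a b ha hab
    have ha2 : (2:ℝ) < a := by rcases ha with ha | ha <;> linarith
    have ha1 : (1:ℝ) ≤ a := by linarith
    apply dix_integ hab (hfm.mono (fun x hx => by simp only [Set.mem_Ici]; linarith [hx.1]))
      (dix_w2cont (by linarith))
    exact fun x hx => ne_of_gt (dix_w2pos ha2 hx.1)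
  have intψ1 : IntervalIntegrable ψ MeasureTheory.volume (2 * e1) Λ :=
    hψint (Or.inl le_rfl) h2e1Λ
  have intψ2 : IntervalIntegrable ψ MeasureTheory.volume Λ (2 * Λ) :=
    hψint (Or.inr le_rfl) hΛ2Λ
  have intc_mid : IntervalIntegrable
      (fun ν => 2 * C * Real.log 2 * (1 / (ν * (Real.log ν - Real.log 2))))
      MeasureTheory.volume (2 * e1) Λ := by
    apply ContinuousOn.intervalIntegrable
    rw [Set.uIcc_of_le h2e1Λ]
    exact continuousOn_const.mul (continuousOn_const.div (dix_w2cont (by linarith))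
      (fun x hx => ne_of_gt (dix_w2pos (by linarith) hx.1)))
  -- Step A : If ≤ Ig + Ih
  have stepA : (∫ μ in e1..Λ, f μ / (μ * Real.log μ))
      ≤ (∫ μ in e1..Λ, g μ / (μ * Real.log μ)) + ∫ μ in e1..Λ, h μ / (μ * Real.log μ) := by
    rw [← intervalIntegral.integral_add int_g int_h]
    apply intervalIntegral.integral_mono_on he1Λ int_f (int_g.add int_h)
    intro x hx
    have hw := hw1pos (le_refl e1) x hx
    have := (hbound x (by linarith [hx.1])).1
    rw [← add_div]
    exact div_le_div_of_nonneg_right this hw.le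
  -- Step B : Ig + Ih ≤ J
  have stepB : (∫ μ in e1..Λ, g μ / (μ * Real.log μ)) + (∫ μ in e1..Λ, h μ / (μ * Real.log μ))
      ≤ ∫ μ in e1..Λ, f (2 * μ) / (μ * Real.log μ) := by
    rw [← intervalIntegral.integral_add int_g int_h]
    apply intervalIntegral.integral_mono_on he1Λ (int_g.add int_h) int_f2
    intro x hx
    have hw := hw1pos (le_refl e1) x hx
    have := (hbound x (by linarith [hx.1])).2
    rw [← add_div]
    exact div_le_div_of_nonneg_right this hw.le
  -- Step C : change of variables
  have stepC : (∫ μ in e1..Λ, f (2 * μ) / (μ * Real.log μ)) = ∫ ν in 2 * e1..2 * Λ, ψ ν := by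
    have hcongr : Set.EqOn (fun μ => f (2 * μ) / (μ * Real.log μ)) (fun μ => 2 * ψ (2 * μ))
        (Set.uIcc e1 Λ) := by
      intro μ hμ
      rw [Set.uIcc_of_le he1Λ] at hμ
      have hμpos : 0 < μ := lt_of_lt_of_le he1pos hμ.1
      have hlog2μ : Real.log (2 * μ) = Real.log 2 + Real.log μ :=
        Real.log_mul two_ne_zero (ne_of_gt hμpos)
      simp only [hψdef]
      rw [hlog2μ]
      have h2 : Real.log 2 + Real.log μ - Real.log 2 = Real.log μ := by ring
      rw [h2]
      field_simp
    calc (∫ μ in e1..Λ, f (2 * μ) / (μ * Real.log μ))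
        = ∫ μ in e1..Λ, 2 * ψ (2 * μ) := intervalIntegral.integral_congr hcongr
      _ = 2 * ∫ μ in e1..Λ, ψ (2 * μ) := intervalIntegral.integral_const_mul 2 _
      _ = 2 * (((2:ℝ)⁻¹) * ∫ ν in 2 * e1..2 * Λ, ψ ν) := by
          rw [intervalIntegral.integral_comp_mul_left ψ two_ne_zero, smul_eq_mul]
      _ = ∫ ν in 2 * e1..2 * Λ, ψ ν := by ring
  -- Step D : split
  have stepD : (∫ ν in 2 * e1..2 * Λ, ψ ν)
      = (∫ ν in 2 * e1..Λ, ψ ν) + ∫ ν in Λ..2 * Λ, ψ ν :=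
    (intervalIntegral.integral_add_adjacent_intervals intψ1 intψ2).symm
  -- Step E : main comparison on [2e1, Λ]
  have stepE : (∫ ν in 2 * e1..Λ, ψ ν)
      ≤ (∫ ν in 2 * e1..Λ, f ν / (ν * Real.log ν))
        + ∫ ν in 2 * e1..Λ, 2 * C * Real.log 2 * (1 / (ν * (Real.log ν - Real.log 2))) := by
    rw [← intervalIntegral.integral_add int_f_mid intc_mid]
    apply intervalIntegral.integral_mono_on h2e1Λ intψ1 (int_f_mid.add intc_mid)
    intro ν hν
    have hν2 : (2:ℝ) < ν := by linarith [hν.1]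
    have hνe : e1 ≤ ν := by linarith [hν.1]
    have hνpos : (0:ℝ) < ν := by linarith
    have hB : 0 < Real.log ν := Real.log_pos (by linarith)
    have hA : 0 < Real.log ν - Real.log 2 := by
      have := Real.log_lt_log two_pos hν2; linarith
    have hfν : f ν ≤ 2 * C * Real.log ν := hfb ν hνe
    have hf0' : 0 ≤ f ν := hf0 ν
    simp only [hψdef]
    have key : f ν / (ν * (Real.log ν - Real.log 2)) =
        f ν / (ν * Real.log ν)
          + f ν * Real.log 2 / (ν * (Real.log ν - Real.log 2) * Real.log ν) := by
      field_simp
      ring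
    have bnd : f ν * Real.log 2 / (ν * (Real.log ν - Real.log 2) * Real.log ν)
        ≤ 2 * C * Real.log 2 * (1 / (ν * (Real.log ν - Real.log 2))) := by
      have h2' : 2 * C * Real.log 2 * (1 / (ν * (Real.log ν - Real.log 2)))
          = (2 * C * Real.log ν) * Real.log 2
              / (ν * (Real.log ν - Real.log 2) * Real.log ν) := by
        field_simp
      rw [h2']
      gcongr
    linarith [key.le, key.ge]
  -- Step F : explicit integral
  have stepF : (∫ ν in 2 * e1..Λ, 2 * C * Real.log 2 * (1 / (ν * (Real.log ν - Real.log 2))))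
      = 2 * C * Real.log 2 * Real.log (Real.log Λ - Real.log 2) := by
    rw [intervalIntegral.integral_const_mul, dix_antider (by linarith) h2e1Λ]
    have hone : Real.log (2 * e1) - Real.log 2 = 1 := by
      rw [Real.log_mul two_ne_zero (ne_of_gt he1pos), he1def, Real.log_exp]; ring
    rw [hone, Real.log_one]
    ring
  -- Step G : tail estimate
  have stepG : (∫ ν in Λ..2 * Λ, ψ ν) ≤ 14 * C / 5 := by
    have hM : ∀ ν ∈ Set.Icc Λ (2 * Λ), ψ ν
        ≤ 2 * C * (Real.log Λ + 1) / (Λ * (Real.log Λ - 1)) := by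
      intro ν hν
      have hνΛ : Λ ≤ ν := hν.1
      have hν2 : (2:ℝ) < ν := by linarith
      have hνpos : (0:ℝ) < ν := by linarith
      have hlogν : Real.log ν ≤ Real.log (2 * Λ) := Real.log_le_log hνpos hν.2
      have hlog2Λ : Real.log (2 * Λ) = Real.log 2 + Real.log Λ :=
        Real.log_mul two_ne_zero (ne_of_gt hΛpos)
      have hnum : f ν ≤ 2 * C * (Real.log Λ + 1) := by
        have := hfb ν (by linarith)
        have hlogν' : Real.log ν ≤ Real.log Λ + 1 := by rw [hlog2Λ] at hlogν; linarith
        nlinarith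
      have hLν : Real.log Λ ≤ Real.log ν := Real.log_le_log hΛpos hνΛ
      have hden : Λ * (Real.log Λ - 1) ≤ ν * (Real.log ν - Real.log 2) := by
        have h1 : Real.log Λ - 1 ≤ Real.log ν - Real.log 2 := by linarith
        have h2 : (0:ℝ) ≤ Real.log Λ - 1 := by linarith
        nlinarith
      have hdenpos : (0:ℝ) < Λ * (Real.log Λ - 1) := by nlinarith
      simp only [hψdef]
      exact div_le_div₀ (by nlinarith [hC.le]) hnum hdenpos hden
    have hmono := intervalIntegral.integral_mono_on hΛ2Λ intψ2
      (intervalIntegrable_const) hM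
    rw [intervalIntegral.integral_const, smul_eq_mul] at hmono
    have heq : (2 * Λ - Λ) * (2 * C * (Real.log Λ + 1) / (Λ * (Real.log Λ - 1)))
        = 2 * C * (Real.log Λ + 1) / (Real.log Λ - 1) := by
      have hΛne : Λ ≠ 0 := ne_of_gt hΛpos
      have hL1 : Real.log Λ - 1 ≠ 0 := by linarith
      field_simp
      ring
    rw [heq] at hmono
    have hfinal : 2 * C * (Real.log Λ + 1) / (Real.log Λ - 1) ≤ 14 * C / 5 := by
      rw [div_le_div_iff₀ (by linarith) (by norm_num)]
      nlinarith [mul_nonneg hC.le (show (0:ℝ) ≤ Real.log Λ - 6 by linarith)]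
    linarith
  -- drop the initial piece of If
  have hsplitf : (∫ μ in e1..Λ, f μ / (μ * Real.log μ))
      = (∫ μ in e1..2 * e1, f μ / (μ * Real.log μ))
        + ∫ μ in 2 * e1..Λ, f μ / (μ * Real.log μ) :=
    (intervalIntegral.integral_add_adjacent_intervals int_f_low int_f_mid).symm
  have hlow0 : 0 ≤ ∫ μ in e1..2 * e1, f μ / (μ * Real.log μ) := by
    apply intervalIntegral.integral_nonneg he12e1
    intro u hu
    have h1u : (1:ℝ) < u := by linarith [hu.1]
    have hlu := Real.log_pos h1u
    have hupos : (0:ℝ) < u := by linarith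
    exact div_nonneg (hf0 u) (by positivity)
  -- numeric combination
  have hXle : Real.log (Real.log Λ - Real.log 2) ≤ Real.log (Real.log Λ) :=
    Real.log_le_log (by linarith) (by linarith)
  have hXnn : 0 ≤ Real.log (Real.log Λ - Real.log 2) :=
    Real.log_nonneg (by linarith)
  have hT : (∫ μ in e1..Λ, g μ / (μ * Real.log μ)) + (∫ μ in e1..Λ, h μ / (μ * Real.log μ))
      - (∫ μ in e1..Λ, f μ / (μ * Real.log μ)) ≤ 3 * C * Real.log (Real.log Λ) := by
    have key : (∫ μ in e1..Λ, g μ / (μ * Real.log μ)) + (∫ μ in e1..Λ, h μ / (μ * Real.log μ))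
        - (∫ μ in e1..Λ, f μ / (μ * Real.log μ))
        ≤ 2 * C * Real.log 2 * Real.log (Real.log Λ - Real.log 2) + 14 * C / 5 := by
      linarith [stepB, stepC.le, stepC.ge, stepD.le, stepE, stepF.le, stepG, hsplitf.le, hlow0]
    have t1 : 2 * C * Real.log 2 * Real.log (Real.log Λ - Real.log 2)
        ≤ 2 * C * Real.log 2 * Real.log (Real.log Λ) := by
      apply mul_le_mul_of_nonneg_left hXle
      positivity
    have hYnn : (0:ℝ) ≤ Real.log (Real.log Λ) := by linarith
    have t2 : 2 * C * Real.log 2 * Real.log (Real.log Λ)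
        ≤ 1.4 * C * Real.log (Real.log Λ) := by
      nlinarith [mul_nonneg hC.le hYnn]
    have t3 : 14 * C / 5 ≤ 1.6 * C * Real.log (Real.log Λ) := by
      nlinarith [mul_nonneg hC.le (show (0:ℝ) ≤ Real.log (Real.log Λ) - 5 by linarith)]
    linarith
  have hT0 : 0 ≤ (∫ μ in e1..Λ, g μ / (μ * Real.log μ))
      + (∫ μ in e1..Λ, h μ / (μ * Real.log μ))
      - ∫ μ in e1..Λ, f μ / (μ * Real.log μ) := by linarith
  have heq : (1 / Real.log Λ) * (∫ μ in e1..Λ, f μ / (μ * Real.log μ))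
      - (1 / Real.log Λ) * (∫ μ in e1..Λ, g μ / (μ * Real.log μ))
      - (1 / Real.log Λ) * (∫ μ in e1..Λ, h μ / (μ * Real.log μ))
      = -(((∫ μ in e1..Λ, g μ / (μ * Real.log μ))
          + (∫ μ in e1..Λ, h μ / (μ * Real.log μ))
          - ∫ μ in e1..Λ, f μ / (μ * Real.log μ)) / Real.log Λ) := by
    field_simp
    ring
  rw [heq, abs_neg, abs_of_nonneg (div_nonneg hT0 hLpos.le)]
  exact div_le_div_of_nonneg_right hT hLpos.le
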